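/- arXiv:2206.02767 — 2 statements merged into one kernel-verified Lean document; each statement's English description precedes it below -/
import Mathlib

section
/- For all u, v ∈ V: (i) d_{G,w}(u,v) ≤ d̃^ℓ_{G,w}(u,v); and (ii) if u and v are joined by a path with at most ℓ edges, then d̃^ℓ_{G,w}(u,v) ≤ (1+ε)·d^ℓ_{G,w}(u,v) (in particular d̃^ℓ_{G,w}(u,v) is finite). -/
open scoped ENNReal

private lemma list_sum_ofReal (l : List ℝ) (h : ∀ x ∈ l, 0 ≤ x) :
    (l.map ENNReal.ofReal).sum = ENNReal.ofReal l.sum := by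
  induction l with
  | nil => simp
  | cons a t ih =>
    simp only [List.map_cons, List.sum_cons]
    rw [ih (fun x hx => h x (List.mem_cons_of_mem _ hx)),
      ← ENNReal.ofReal_add (h a List.mem_cons_self)
        (List.sum_nonneg (fun x hx => h x (List.mem_cons_of_mem _ hx)))]

private lemma list_len_le_sum {α : Type*} (l : List α) (f : α → ℝ)
    (h : ∀ x ∈ l, 1 ≤ f x) : (l.length : ℝ) ≤ (l.map f).sum := by
  induction l with
  | nil => simp
  | cons a t ih =>
    simp only [List.map_cons, List.sum_cons, List.length_cons, Nat.cast_succ]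
    have h1 := h a List.mem_cons_self
    have h2 := ih (fun x hx => h x (List.mem_cons_of_mem _ hx))
    linarith

private lemma list_sum_le_add {α : Type*} (l : List α) (f g : α → ℝ)
    (h : ∀ x ∈ l, f x ≤ g x + 1) :
    (l.map f).sum ≤ (l.map g).sum + l.length := by
  induction l with
  | nil => simp
  | cons a t ih =>
    simp only [List.map_cons, List.sum_cons, List.length_cons, Nat.cast_succ]
    have h1 := h a List.mem_cons_self
    have h2 := ih (fun x hx => h x (List.mem_cons_of_mem _ hx))
    linarith

private lemma exists_pow_two_bound (W : ℝ) (hW : 1 ≤ W) :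
    ∃ i : ℕ, W ≤ 2 ^ i ∧ (2:ℝ) ^ i ≤ 2 * W := by
  classical
  have hex : ∃ i : ℕ, W ≤ 2 ^ i := by
    obtain ⟨j, hj⟩ := pow_unbounded_of_one_lt W (one_lt_two (α := ℝ))
    exact ⟨j, hj.le⟩
  refine ⟨Nat.find hex, Nat.find_spec hex, ?_⟩
  rcases Nat.eq_zero_or_pos (Nat.find hex) with h0 | hpos
  · rw [h0]; norm_num; linarith
  · have hm := Nat.find_min hex (Nat.pred_lt hpos.ne')
    push_neg at hm
    have hpow : (2:ℝ) ^ Nat.find hex = 2 * 2 ^ (Nat.find hex - 1) := by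
      rw [← pow_succ']
      congr 1
      omega
    rw [hpow]
    simp only [Nat.pred_eq_sub_one] at hm
    linarith

/-- The length of a walk with respect to real edge weights (summed as `ℝ≥0∞`
via `ENNReal.ofReal`). -/
noncomputable def wlen {V : Type*} (G : SimpleGraph V) (w : V → V → ℝ) {u v : V}
    (p : G.Walk u v) : ℝ≥0∞ :=
  (p.darts.map fun d => ENNReal.ofReal (w d.toProd.1 d.toProd.2)).sum

/-- The weighted distance: the infimum of walk lengths (`∞` if `u` and `v` are
not connected, `0` if `u = v`). -/
noncomputable def wdist {V : Type*} (G : SimpleGraph V) (w : V → V → ℝ) (u v : V) : ℝ≥0∞ :=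
  ⨅ p : G.Walk u v, wlen G w p

/-- The `L`-hop bounded distance: minimum length over walks with at most `L` edges. -/
noncomputable def hopdist {V : Type*} (G : SimpleGraph V) (w : V → V → ℝ) (L : ℝ)
    (u v : V) : ℝ≥0∞ :=
  ⨅ (p : G.Walk u v) (_ : (p.length : ℝ) ≤ L), wlen G w p

/-- The rounded weights `w_i(e) = ⌈2L·w(e)/(ε·2^i)⌉` (positive natural numbers, viewed
as real weights). -/
noncomputable def wround {V : Type*} (w : V → V → ℝ) (ε L : ℝ) (i : ℕ) : V → V → ℝ :=
  fun u v => (⌈2 * L * w u v / (ε * 2 ^ i)⌉₊ : ℝ)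

/-- The approximate `L`-hop distance `d̃^L_{G,w}(u,v)`: the minimum over integers `i ≥ 0`
with `d_{G,w_i}(u,v) ≤ (1+2/ε)·L` of `d_{G,w_i}(u,v)·ε·2^i/(2L)`, and `∞` if no such `i`
exists. -/
noncomputable def dtilde {V : Type*} (G : SimpleGraph V) (w : V → V → ℝ) (ε L : ℝ)
    (u v : V) : ℝ≥0∞ :=
  ⨅ (i : ℕ) (_ : wdist G (wround w ε L i) u v ≤ ENNReal.ofReal ((1 + 2 / ε) * L)),
    wdist G (wround w ε L i) u v * ENNReal.ofReal (ε * 2 ^ i / (2 * L))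

private lemma wdist_le_wlen {V : Type*} (G : SimpleGraph V) (w : V → V → ℝ) {u v : V}
    (p : G.Walk u v) : wdist G w u v ≤ wlen G w p :=
  iInf_le _ p

private lemma wlen_eq_ofReal {V : Type*} (G : SimpleGraph V) (w : V → V → ℝ)
    (hd0 : ∀ d : G.Dart, 0 ≤ w d.toProd.1 d.toProd.2) {u v : V} (p : G.Walk u v) :
    wlen G w p = ENNReal.ofReal ((p.darts.map fun d => w d.toProd.1 d.toProd.2).sum) := by
  unfold wlen
  rw [← list_sum_ofReal _ (by
    intro x hx
    obtain ⟨d, _, rfl⟩ := List.mem_map.mp hx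
    exact hd0 d), List.map_map]
  rfl

/-- For all `u, v ∈ V`: (i) `d_{G,w}(u,v) ≤ d̃^ℓ_{G,w}(u,v)`; and
(ii) if `u` and `v` are joined by a path with at most `ℓ` edges, then
`d̃^ℓ_{G,w}(u,v) ≤ (1+ε)·d^ℓ_{G,w}(u,v)`; in particular `d̃^ℓ_{G,w}(u,v)` is finite. -/
theorem stmt0 {V : Type*} [Fintype V] (G : SimpleGraph V) (w : V → V → ℝ)
    (hsymm : ∀ u v, w u v = w v u) (hw : ∀ u v, G.Adj u v → 1 ≤ w u v)
    (ε : ℝ) (hε : 0 < ε) (ℓ : ℕ) (hℓ : 1 ≤ ℓ) (u v : V) :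
    wdist G w u v ≤ dtilde G w ε (ℓ : ℝ) u v ∧
    ((∃ p : G.Walk u v, p.length ≤ ℓ) →
      dtilde G w ε (ℓ : ℝ) u v ≤ ENNReal.ofReal (1 + ε) * hopdist G w (ℓ : ℝ) u v ∧
      dtilde G w ε (ℓ : ℝ) u v ≠ ⊤) := by
  have hL : (1:ℝ) ≤ (ℓ:ℝ) := by exact_mod_cast hℓ
  set L : ℝ := (ℓ:ℝ) with hLdef
  have hLpos : (0:ℝ) < L := by linarith
  have hcpos : ∀ i : ℕ, (0:ℝ) < ε * 2 ^ i / (2 * L) := fun i => by positivity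
  have hd0 : ∀ d : G.Dart, 0 ≤ w d.toProd.1 d.toProd.2 :=
    fun d => le_trans zero_le_one (hw _ _ d.adj)
  have hd1 : ∀ d : G.Dart, 1 ≤ w d.toProd.1 d.toProd.2 := fun d => hw _ _ d.adj
  have keyA : ∀ (i : ℕ) (x y : V) (p : G.Walk x y),
      wlen G w p ≤ wlen G (wround w ε L i) p * ENNReal.ofReal (ε * 2 ^ i / (2 * L)) := by
    intro i x y p
    unfold wlen
    rw [← List.sum_map_mul_right]
    refine List.sum_le_sum fun d _ => ?_
    have hnneg : (0:ℝ) ≤ wround w ε L i d.toProd.1 d.toProd.2 := Nat.cast_nonneg _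
    rw [← ENNReal.ofReal_mul hnneg]
    apply ENNReal.ofReal_le_ofReal
    have h1 : 2 * L * w d.toProd.1 d.toProd.2 / (ε * 2 ^ i)
        ≤ (⌈2 * L * w d.toProd.1 d.toProd.2 / (ε * 2 ^ i)⌉₊ : ℝ) := Nat.le_ceil _
    have h2 : 2 * L * w d.toProd.1 d.toProd.2 / (ε * 2 ^ i) * (ε * 2 ^ i / (2 * L))
        = w d.toProd.1 d.toProd.2 := by
      field_simp
    have h3 := mul_le_mul_of_nonneg_right h1 (hcpos i).le
    unfold wround
    linarith
  constructor
  · refine le_iInf fun i => le_iInf fun _ => ?_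
    have hb0 : ENNReal.ofReal (ε * 2 ^ i / (2 * L)) ≠ 0 :=
      (ENNReal.ofReal_pos.mpr (hcpos i)).ne'
    have hbt : ENNReal.ofReal (ε * 2 ^ i / (2 * L)) ≠ ⊤ := ENNReal.ofReal_ne_top
    rw [← ENNReal.div_le_iff_le_mul (Or.inl hb0) (Or.inl hbt)]
    unfold wdist
    refine le_iInf fun p => ?_
    rw [ENNReal.div_le_iff_le_mul (Or.inl hb0) (Or.inl hbt)]
    exact le_trans (iInf_le _ p) (keyA i u v p)
  · rintro ⟨p₀, hp₀⟩
    have claim : ∀ p : G.Walk u v, p.length ≤ ℓ →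
        dtilde G w ε L u v ≤ ENNReal.ofReal (1 + ε) * wlen G w p := by
      intro p hp
      set W : ℝ := (p.darts.map fun d => w d.toProd.1 d.toProd.2).sum with hWdef
      have hwlen : wlen G w p = ENNReal.ofReal W := wlen_eq_ofReal G w hd0 p
      rcases Nat.eq_zero_or_pos p.length with hlen | hlen
      · have hdarts : p.darts = [] :=
          List.eq_nil_of_length_eq_zero (by rw [p.length_darts]; exact hlen)
        have h0 : wlen G (wround w ε L 0) p = 0 := by
          unfold wlen; rw [hdarts]; simp
        have hcond : wdist G (wround w ε L 0) u v ≤ ENNReal.ofReal ((1 + 2 / ε) * L) := by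
          refine le_trans (wdist_le_wlen G _ p) ?_
          rw [h0]; exact zero_le
        have hval : wdist G (wround w ε L 0) u v = 0 :=
          le_antisymm (le_trans (wdist_le_wlen G _ p) (le_of_eq h0)) zero_le
        have hstep0 : dtilde G w ε L u v
            ≤ wdist G (wround w ε L 0) u v * ENNReal.ofReal (ε * 2 ^ 0 / (2 * L)) := by
          unfold dtilde
          exact le_trans (iInf_le _ 0) (iInf_le _ hcond)
        rw [hval, zero_mul] at hstep0
        exact le_trans hstep0 zero_le
      · have hA : (p.darts.length : ℝ) ≤ W := by
          have := list_len_le_sum p.darts (fun d => w d.toProd.1 d.toProd.2)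
            (fun d _ => hd1 d)
          rw [← hWdef] at this
          exact this
        have hlen1 : (1:ℝ) ≤ (p.darts.length : ℝ) := by
          rw [p.length_darts]; exact_mod_cast hlen
        have hW1 : 1 ≤ W := le_trans hlen1 hA
        obtain ⟨i, hi1, hi2⟩ := exists_pow_two_bound W hW1
        set r : ℝ := 2 * L / (ε * 2 ^ i) with hrdef
        have hrpos : 0 < r := by rw [hrdef]; positivity
        have hub : wlen G (wround w ε L i) p ≤ ENNReal.ofReal (W * r + L) := by
          rw [wlen_eq_ofReal G _ (fun d => Nat.cast_nonneg _) p]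
          apply ENNReal.ofReal_le_ofReal
          have hstep : (p.darts.map fun d => wround w ε L i d.toProd.1 d.toProd.2).sum
              ≤ (p.darts.map fun d => w d.toProd.1 d.toProd.2 * r).sum + p.darts.length := by
            apply list_sum_le_add
            intro d _
            have hx0 : 0 ≤ 2 * L * w d.toProd.1 d.toProd.2 / (ε * 2 ^ i) :=
              div_nonneg (mul_nonneg (by positivity) (hd0 d)) (by positivity)
            have hceil := Nat.ceil_lt_add_one hx0
            have hrw : 2 * L * w d.toProd.1 d.toProd.2 / (ε * 2 ^ i)
                = w d.toProd.1 d.toProd.2 * r := by rw [hrdef]; ring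
            unfold wround
            linarith
          rw [List.sum_map_mul_right, ← hWdef] at hstep
          have hlenL : (p.darts.length : ℝ) ≤ L := by
            rw [p.length_darts, hLdef]; exact_mod_cast hp
          linarith
        have h2i : (2:ℝ) ^ i * r = 2 * L / ε := by
          rw [hrdef]; field_simp
        have hWr : W * r ≤ 2 * L / ε := by
          have := mul_le_mul_of_nonneg_right hi1 hrpos.le
          linarith
        have hcond : wdist G (wround w ε L i) u v ≤ ENNReal.ofReal ((1 + 2 / ε) * L) := by
          refine le_trans (wdist_le_wlen G _ p) (le_trans hub (ENNReal.ofReal_le_ofReal ?_))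
          have : (1 + 2 / ε) * L = L + 2 * L / ε := by field_simp
          rw [this]; linarith
        have hstepi : dtilde G w ε L u v
            ≤ wdist G (wround w ε L i) u v * ENNReal.ofReal (ε * 2 ^ i / (2 * L)) := by
          unfold dtilde
          exact le_trans (iInf_le _ i) (iInf_le _ hcond)
        refine le_trans hstepi ?_
        have hWrL : (0:ℝ) ≤ W * r + L :=
          add_nonneg (mul_nonneg (by linarith) hrpos.le) hLpos.le
        have hmul : wdist G (wround w ε L i) u v * ENNReal.ofReal (ε * 2 ^ i / (2 * L))
            ≤ ENNReal.ofReal ((W * r + L) * (ε * 2 ^ i / (2 * L))) := by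
          rw [ENNReal.ofReal_mul hWrL]
          exact mul_le_mul_left (le_trans (wdist_le_wlen G _ p) hub) _
        refine le_trans hmul ?_
        rw [hwlen, ← ENNReal.ofReal_mul (by linarith : (0:ℝ) ≤ 1 + ε)]
        apply ENNReal.ofReal_le_ofReal
        have hr1 : r * (ε * 2 ^ i / (2 * L)) = 1 := by
          rw [hrdef]; field_simp
        have hid : (W * r + L) * (ε * 2 ^ i / (2 * L))
            = W * (r * (ε * 2 ^ i / (2 * L))) + L * (ε * 2 ^ i / (2 * L)) := by ring
        have hid2 : L * (ε * 2 ^ i / (2 * L)) = ε * 2 ^ i / 2 := by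
          field_simp
        rw [hid, hr1, mul_one, hid2]
        have := mul_le_mul_of_nonneg_left hi2 hε.le
        nlinarith
    have hne : dtilde G w ε L u v ≠ ⊤ := by
      intro htop
      have h1 := claim p₀ hp₀
      rw [htop] at h1
      have h2 : ENNReal.ofReal (1 + ε) * wlen G w p₀ ≠ ⊤ := by
        rw [wlen_eq_ofReal G w hd0 p₀]
        exact ENNReal.mul_ne_top ENNReal.ofReal_ne_top ENNReal.ofReal_ne_top
      exact h2 (top_le_iff.mp h1)
    refine ⟨?_, hne⟩
    have hb0 : ENNReal.ofReal (1 + ε) ≠ 0 := (ENNReal.ofReal_pos.mpr (by linarith)).ne'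
    have hbt : ENNReal.ofReal (1 + ε) ≠ ⊤ := ENNReal.ofReal_ne_top
    rw [mul_comm, ← ENNReal.div_le_iff_le_mul (Or.inl hb0) (Or.inl hbt)]
    unfold hopdist
    refine le_iInf fun p => le_iInf fun hp => ?_
    rw [ENNReal.div_le_iff_le_mul (Or.inl hb0) (Or.inl hbt), mul_comm]
    refine claim p ?_
    rw [hLdef] at hp
    exact_mod_cast hp
end

section
/- The unweighted diameter D_G of the underlying (unweighted) graph G of the diameter gadget satisfies h ≤ D_G ≤ 2h + 6. -/
set_option linter.unusedVariables false

/-- Vertices of the diameter gadget. -/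
inductive GV (h s ℓ : ℕ) where
  /-- tree node `t_{i,j}` encoded in heap order: `t m` is the tree node numbered `m+1`,
  i.e. the node of depth `i` and position `j` with `m + 1 = 2^i + (j-1)`. -/
  | t (m : Fin (2 ^ (h + 1) - 1))
  /-- path node `p_{i+1, j+1}` -/
  | p (i : Fin (2 * s + ℓ)) (j : Fin (2 ^ h))
  /-- node `a_{i+1}` -/
  | a (i : Fin (2 ^ s))
  /-- node `b_{i+1}` -/
  | b (i : Fin (2 ^ s))
  /-- node `a^z_{j+1}` -/
  | ah (z : Bool) (j : Fin s)
  /-- node `b^z_{j+1}` -/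
  | bh (z : Bool) (j : Fin s)
  /-- node `a*_{j+1}` -/
  | as (j : Fin ℓ)
  /-- node `b*_{j+1}` -/
  | bs (j : Fin ℓ)
  deriving DecidableEq, Fintype

/-- Base (oriented) adjacency of the diameter gadget.  Here `bin(i,j)` is realized as
`Nat.testBit` on the 0-based index. -/
def gadgetAdj0 {h s ℓ : ℕ} : GV h s ℓ → GV h s ℓ → Prop
  | .t m, .t m' => 1 ≤ m.val ∧ m'.val + 1 = (m.val + 1) / 2
  | .t m, .p _ j => m.val + 1 = 2 ^ h + j.val
  | .p i j, .p i' j' => i = i' ∧ j.val = j'.val + 1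
  | .ah z jj, .p i j => i.val = 2 * jj.val + (if z then 1 else 0) ∧ j.val = 0
  | .bh z jj, .p i j => i.val = 2 * jj.val + (if z then 0 else 1) ∧ j.val = 2 ^ h - 1
  | .as jj, .p i j => i.val = 2 * s + jj.val ∧ j.val = 0
  | .bs jj, .p i j => i.val = 2 * s + jj.val ∧ j.val = 2 ^ h - 1
  | .a i, .ah z j => z = i.val.testBit j.val
  | .b i, .bh z j => z = i.val.testBit j.val
  | .a i, .a i' => i ≠ i'
  | .b i, .b i' => i ≠ i'
  | .a _, .as _ => True
  | .b _, .bs _ => True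
  | _, _ => False

/-- The (underlying, unweighted) diameter gadget graph. -/
def gadget (h s ℓ : ℕ) : SimpleGraph (GV h s ℓ) where
  Adj u v := u ≠ v ∧ (gadgetAdj0 u v ∨ gadgetAdj0 v u)
  symm := ⟨fun u v huv => ⟨huv.1.symm, huv.2.symm⟩⟩
  loopless := ⟨fun u hu => hu.1 rfl⟩

/-- Potential function: depth in the tree, extended outwards. -/
def gpot {h s ℓ : ℕ} : GV h s ℓ → ℕ
  | .t m => Nat.log 2 (m.val + 1)
  | .p _ _ => h + 1
  | .a _ => h + 3
  | .b _ => h + 3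
  | .ah _ _ => h + 2
  | .bh _ _ => h + 2
  | .as _ => h + 2
  | .bs _ => h + 2

lemma gpot_step0 {h s ℓ : ℕ} {u v : GV h s ℓ} (huv : gadgetAdj0 u v) :
    gpot u ≤ gpot v + 1 ∧ gpot v ≤ gpot u + 1 := by
  cases u <;> cases v <;> simp only [gadgetAdj0, gpot] at huv ⊢ <;> try omega
  · -- t t
    obtain ⟨h1, h2⟩ := huv
    rename_i m m'
    have hd : Nat.log 2 ((m.val + 1) / 2) = Nat.log 2 (m.val + 1) - 1 :=
      Nat.log_div_base 2 (m.val + 1) ▸ rfl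
    have hp : 1 ≤ Nat.log 2 (m.val + 1) := Nat.log_pos (by norm_num) (by omega)
    rw [h2, hd]
    omega
  · -- t p
    rename_i m i j
    have hj := j.isLt
    have : Nat.log 2 (m.val + 1) = h := by
      rw [huv]
      exact Nat.log_eq_of_pow_le_of_lt_pow (Nat.le_add_right _ _) (by rw [pow_succ]; omega)
    omega

lemma gpot_adj {h s ℓ : ℕ} {u v : GV h s ℓ} (huv : (gadget h s ℓ).Adj u v) :
    gpot v ≤ gpot u + 1 := by
  rcases huv.2 with h0 | h0
  · exact (gpot_step0 h0).2
  · exact (gpot_step0 h0).1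

lemma gpot_walk {h s ℓ : ℕ} {u v : GV h s ℓ} (w : (gadget h s ℓ).Walk u v) :
    gpot v ≤ gpot u + w.length := by
  induction w with
  | nil => simp
  | cons hadj w ih =>
    have := gpot_adj hadj
    simp only [SimpleGraph.Walk.length_cons]
    omega

lemma pow_pos' (h : ℕ) : 0 < 2 ^ h := Nat.pow_pos (by norm_num)

lemma tree_sz_pos (h : ℕ) : 0 < 2 ^ (h + 1) - 1 := by
  have := pow_pos' (h + 1)
  have : 2 ≤ 2 ^ (h + 1) := Nat.le_self_pow (by omega) 2
  omega

/-- The root of the tree. -/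
def groot (h s ℓ : ℕ) : GV h s ℓ := .t ⟨0, tree_sz_pos h⟩

lemma edist_adj_le {h s ℓ : ℕ} {u v : GV h s ℓ} (huv : (gadget h s ℓ).Adj u v) :
    (gadget h s ℓ).edist u v ≤ 1 :=
  le_of_eq (SimpleGraph.edist_eq_one_iff_adj.mpr huv)

/-- Distance from a tree node to the root. -/
lemma tree_edist' {h s ℓ : ℕ} (n : ℕ) (hn : n < 2 ^ (h + 1) - 1) :
    (gadget h s ℓ).edist (.t ⟨n, hn⟩) (groot h s ℓ) ≤ (Nat.log 2 (n + 1) : ℕ∞) := by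
  induction n using Nat.strong_induction_on with
  | _ n ih =>
  rcases Nat.eq_zero_or_pos n with h0 | h0
  · subst h0
    have : GV.t (h := h) (s := s) (ℓ := ℓ) ⟨0, hn⟩ = groot h s ℓ := rfl
    rw [this, SimpleGraph.edist_self]
    exact zero_le
  · have hn' : (n + 1) / 2 - 1 < 2 ^ (h + 1) - 1 := by omega
    have hadj : (gadget h s ℓ).Adj (.t ⟨n, hn⟩) (.t ⟨(n + 1) / 2 - 1, hn'⟩) := by
      refine ⟨?_, Or.inl ⟨h0, by simp; omega⟩⟩
      intro hc
      have : n = (n + 1) / 2 - 1 := by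
        have := congrArg (fun v => match v with | GV.t m => m.val | _ => 0) hc
        simpa using this
      omega
    have hlog : Nat.log 2 ((n + 1) / 2 - 1 + 1) = Nat.log 2 (n + 1) - 1 := by
      have h2 : (n + 1) / 2 - 1 + 1 = (n + 1) / 2 := by omega
      rw [h2]
      exact Nat.log_div_base 2 (n + 1) ▸ rfl
    have hp : 1 ≤ Nat.log 2 (n + 1) := Nat.log_pos (by norm_num) (by omega)
    calc (gadget h s ℓ).edist (.t ⟨n, hn⟩) (groot h s ℓ)
        ≤ (gadget h s ℓ).edist (.t ⟨n, hn⟩) (.t ⟨(n + 1) / 2 - 1, hn'⟩)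
            + (gadget h s ℓ).edist (.t ⟨(n + 1) / 2 - 1, hn'⟩) (groot h s ℓ) :=
          SimpleGraph.edist_triangle
      _ ≤ 1 + (Nat.log 2 ((n + 1) / 2 - 1 + 1) : ℕ∞) :=
          add_le_add (edist_adj_le hadj) (ih _ (by omega) hn')
      _ ≤ (Nat.log 2 (n + 1) : ℕ∞) := by
          rw [hlog, show (1 : ℕ∞) = ((1 : ℕ) : ℕ∞) from rfl, ← Nat.cast_add]
          exact_mod_cast by omega

/-- Every vertex is at distance at most `h + 3` from the root. -/
lemma edist_to_root {h s ℓ : ℕ} (hh : 1 ≤ h) (hs : 1 ≤ s) (hℓ : 1 ≤ ℓ) (v : GV h s ℓ) :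
    (gadget h s ℓ).edist v (groot h s ℓ) ≤ ((h + 3 : ℕ) : ℕ∞) := by
  have hlog_le : ∀ m : Fin (2 ^ (h + 1) - 1), Nat.log 2 (m.val + 1) ≤ h := by
    intro m
    have := m.isLt
    have : Nat.log 2 (m.val + 1) < h + 1 :=
      Nat.log_lt_of_lt_pow (by omega) (by omega)
    omega
  have tdist : ∀ m : Fin (2 ^ (h + 1) - 1),
      (gadget h s ℓ).edist (.t m) (groot h s ℓ) ≤ ((h : ℕ) : ℕ∞) := fun m =>
    le_trans (tree_edist' m.val m.isLt) (by exact_mod_cast hlog_le m)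
  have pdist : ∀ (i : Fin (2 * s + ℓ)) (j : Fin (2 ^ h)),
      (gadget h s ℓ).edist (.p i j) (groot h s ℓ) ≤ ((h + 1 : ℕ) : ℕ∞) := by
    intro i j
    have hj := j.isLt
    have h2 : 2 ≤ 2 ^ (h + 1) := Nat.le_self_pow (by omega) 2
    set m : Fin (2 ^ (h + 1) - 1) := ⟨2 ^ h + j.val - 1, by rw [pow_succ]; omega⟩ with hm
    have hpp : 0 < 2 ^ h := pow_pos' h
    have hadj : (gadget h s ℓ).Adj (.p i j) (.t m) := by
      refine ⟨by simp, Or.inr ?_⟩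
      show m.val + 1 = 2 ^ h + j.val
      simp only [hm]; omega
    calc (gadget h s ℓ).edist (.p i j) (groot h s ℓ)
        ≤ (gadget h s ℓ).edist (.p i j) (.t m) + (gadget h s ℓ).edist (.t m) (groot h s ℓ) :=
          SimpleGraph.edist_triangle
      _ ≤ 1 + ((h : ℕ) : ℕ∞) := add_le_add (edist_adj_le hadj) (tdist m)
      _ = ((h + 1 : ℕ) : ℕ∞) := by
          rw [show (1 : ℕ∞) = ((1 : ℕ) : ℕ∞) from rfl, ← Nat.cast_add]
          exact_mod_cast by omega
  -- helper to go via a single p-neighbor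
  have viaP : ∀ (v : GV h s ℓ) (i : Fin (2 * s + ℓ)) (j : Fin (2 ^ h)),
      (gadget h s ℓ).Adj v (.p i j) →
      (gadget h s ℓ).edist v (groot h s ℓ) ≤ ((h + 2 : ℕ) : ℕ∞) := by
    intro v i j hadj
    calc (gadget h s ℓ).edist v (groot h s ℓ)
        ≤ (gadget h s ℓ).edist v (.p i j) + (gadget h s ℓ).edist (.p i j) (groot h s ℓ) :=
          SimpleGraph.edist_triangle
      _ ≤ 1 + ((h + 1 : ℕ) : ℕ∞) := add_le_add (edist_adj_le hadj) (pdist i j)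
      _ = ((h + 2 : ℕ) : ℕ∞) := by
          rw [show (1 : ℕ∞) = ((1 : ℕ) : ℕ∞) from rfl, ← Nat.cast_add]
          exact_mod_cast by omega
  have hpp : 0 < 2 ^ h := pow_pos' h
  have hcast3 : (1 : ℕ∞) + ((h + 2 : ℕ) : ℕ∞) = ((h + 3 : ℕ) : ℕ∞) := by
    rw [show (1 : ℕ∞) = ((1 : ℕ) : ℕ∞) from rfl, ← Nat.cast_add]
    exact_mod_cast by omega
  have mono23 : ((h + 2 : ℕ) : ℕ∞) ≤ ((h + 3 : ℕ) : ℕ∞) := by exact_mod_cast by omega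
  cases v with
  | t m => exact le_trans (tdist m) (by exact_mod_cast by omega)
  | p i j => exact le_trans (pdist i j) (by exact_mod_cast by omega)
  | ah z jj =>
    refine le_trans (viaP (.ah z jj) ⟨2 * jj.val + (if z then 1 else 0), by have := jj.isLt; cases z <;> simp <;> omega⟩
      ⟨0, hpp⟩ ⟨by simp, Or.inl ⟨rfl, rfl⟩⟩) mono23
  | bh z jj =>
    refine le_trans (viaP (.bh z jj) ⟨2 * jj.val + (if z then 0 else 1), by have := jj.isLt; cases z <;> simp <;> omega⟩
      ⟨2 ^ h - 1, by omega⟩ ⟨by simp, Or.inl ⟨rfl, rfl⟩⟩) mono23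
  | as jj =>
    refine le_trans (viaP (.as jj) ⟨2 * s + jj.val, by have := jj.isLt; omega⟩ ⟨0, hpp⟩ ⟨by simp, Or.inl ⟨rfl, rfl⟩⟩) mono23
  | bs jj =>
    refine le_trans (viaP (.bs jj) ⟨2 * s + jj.val, by have := jj.isLt; omega⟩ ⟨2 ^ h - 1, by omega⟩
      ⟨by simp, Or.inl ⟨rfl, rfl⟩⟩) mono23
  | a i =>
    have hadj : (gadget h s ℓ).Adj (.a i) (.as ⟨0, hℓ⟩) := ⟨by simp, Or.inl trivial⟩
    calc (gadget h s ℓ).edist (.a i) (groot h s ℓ)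
        ≤ (gadget h s ℓ).edist (.a i) (.as ⟨0, hℓ⟩)
            + (gadget h s ℓ).edist (.as ⟨0, hℓ⟩) (groot h s ℓ) := SimpleGraph.edist_triangle
      _ ≤ 1 + ((h + 2 : ℕ) : ℕ∞) := add_le_add (edist_adj_le hadj)
            (viaP (.as ⟨0, hℓ⟩) ⟨2 * s + 0, by omega⟩ ⟨0, hpp⟩ ⟨by simp, Or.inl ⟨rfl, rfl⟩⟩)
      _ = ((h + 3 : ℕ) : ℕ∞) := hcast3
  | b i =>
    have hadj : (gadget h s ℓ).Adj (.b i) (.bs ⟨0, hℓ⟩) := ⟨by simp, Or.inl trivial⟩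
    calc (gadget h s ℓ).edist (.b i) (groot h s ℓ)
        ≤ (gadget h s ℓ).edist (.b i) (.bs ⟨0, hℓ⟩)
            + (gadget h s ℓ).edist (.bs ⟨0, hℓ⟩) (groot h s ℓ) := SimpleGraph.edist_triangle
      _ ≤ 1 + ((h + 2 : ℕ) : ℕ∞) := add_le_add (edist_adj_le hadj)
            (viaP (.bs ⟨0, hℓ⟩) ⟨2 * s + 0, by omega⟩ ⟨2 ^ h - 1, by omega⟩ ⟨by simp, Or.inl ⟨rfl, rfl⟩⟩)
      _ = ((h + 3 : ℕ) : ℕ∞) := hcast3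

/-- The unweighted diameter `D_G` of the underlying graph `G` of the
diameter gadget satisfies `h ≤ D_G ≤ 2h + 6`. -/
theorem stmt15 (h s ℓ : ℕ) (hh : 1 ≤ h) (hs : 1 ≤ s) (hℓ : 1 ≤ ℓ) :
    h ≤ (gadget h s ℓ).diam ∧ (gadget h s ℓ).diam ≤ 2 * h + 6 := by
  have hediam : (gadget h s ℓ).ediam ≤ ((2 * h + 6 : ℕ) : ℕ∞) := by
    apply SimpleGraph.ediam_le_of_edist_le
    intro u v
    calc (gadget h s ℓ).edist u v
        ≤ (gadget h s ℓ).edist u (groot h s ℓ) + (gadget h s ℓ).edist (groot h s ℓ) v :=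
          SimpleGraph.edist_triangle
      _ ≤ ((h + 3 : ℕ) : ℕ∞) + ((h + 3 : ℕ) : ℕ∞) := by
          refine add_le_add (edist_to_root hh hs hℓ u) ?_
          rw [SimpleGraph.edist_comm]
          exact edist_to_root hh hs hℓ v
      _ = ((2 * h + 6 : ℕ) : ℕ∞) := by rw [← Nat.cast_add]; exact_mod_cast by omega
  have hne : (gadget h s ℓ).ediam ≠ ⊤ :=
    fun hc => by rw [hc] at hediam; exact (ENat.coe_ne_top _) (top_le_iff.mp hediam)
  have hub : (gadget h s ℓ).diam ≤ 2 * h + 6 := by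
    have := ENat.toNat_le_toNat hediam (ENat.coe_ne_top _)
    rw [ENat.toNat_coe] at this
    simpa [SimpleGraph.diam] using this
  refine ⟨?_, hub⟩
  -- lower bound
  set a0 : GV h s ℓ := .a ⟨0, pow_pos' s⟩ with ha0
  have hreach : (gadget h s ℓ).Reachable (groot h s ℓ) a0 := by
    apply SimpleGraph.reachable_of_edist_ne_top
    rw [SimpleGraph.edist_comm]
    exact fun hc => (ENat.coe_ne_top (h + 3)) (top_le_iff.mp (hc ▸ edist_to_root hh hs hℓ a0))
  obtain ⟨w, hw⟩ := hreach.exists_walk_length_eq_dist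
  have hpot := gpot_walk w
  have hroot : gpot (groot h s ℓ) = 0 := by
    simp [groot, gpot]
  have : h + 3 ≤ w.length := by
    rw [hroot] at hpot
    simpa [ha0, gpot] using hpot
  have hdle := SimpleGraph.dist_le_diam hne (u := groot h s ℓ) (v := a0)
  omega
end
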